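/- Let G be a finite connected loopless multigraph and let v be a cut vertex decomposing G into connected induced subgraphs G_1 = G/H and H, where H is a tree. Then for every divisor f on G, ρ_G(f) = ρ_{G/H}(f_{G/H}). -/

import Mathlib

/-- A finite loopless multigraph on vertex set `V`, given by its symmetric
edge-multiplicity function `e`. -/
structure Multigraph (V : Type*) [Fintype V] [DecidableEq V] where
  e : V → V → ℕ
  symm : ∀ u v, e u v = e v u
  loopless : ∀ v, e v v = 0

namespace Multigraph

variable {V : Type*} [Fintype V] [DecidableEq V]

/-- The degree of a vertex of a multigraph. -/
def vdeg (G : Multigraph V) (v : V) : ℕ := ∑ u, G.e v u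

/-- The number of edges of a multigraph. -/
def edgeCount (G : Multigraph V) : ℕ := (∑ u, ∑ v, G.e u v) / 2

/-- The underlying simple graph (adjacency) of a multigraph. -/
def toSimple (G : Multigraph V) : SimpleGraph V where
  Adj u v := G.e u v ≠ 0
  symm := ⟨by intro u v (h : G.e u v ≠ 0); show G.e v u ≠ 0; rwa [G.symm]⟩
  loopless := ⟨by intro v (h : G.e v v ≠ 0); exact h (G.loopless v)⟩

/-- A multigraph is connected if its underlying simple graph is. -/
def Connected (G : Multigraph V) : Prop := G.toSimple.Connected

/-- The degree of a divisor `f : V → ℤ`. -/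
def degree (f : V → ℤ) : ℤ := ∑ v, f v

/-- A divisor is effective if all its values are nonnegative. -/
def Effective (f : V → ℤ) : Prop := ∀ v, 0 ≤ f v

/-- The divisor `x · Δ_G`, where `Δ_G` is the Laplacian matrix of `G`. -/
def lapApply (G : Multigraph V) (x : V → ℤ) : V → ℤ :=
  fun v => x v * (G.vdeg v : ℤ) - ∑ u, x u * (G.e u v : ℤ)

/-- Linear equivalence of divisors: `g = f + x Δ_G` for some `x : V → ℤ`. -/
def LinEquiv (G : Multigraph V) (f g : V → ℤ) : Prop :=
  ∃ x : V → ℤ, g = f + G.lapApply x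

/-- A divisor is L-effective if it is linearly equivalent to an effective divisor. -/
def LEffective (G : Multigraph V) (f : V → ℤ) : Prop :=
  ∃ g : V → ℤ, G.LinEquiv f g ∧ Effective g

/-- The Baker–Norine rank of a divisor: `-1` if `f` is not L-effective, and
otherwise the largest `r ≥ 0` such that `f - λ` is L-effective for every
effective divisor `λ` of degree `r`. -/
noncomputable def rank (G : Multigraph V) (f : V → ℤ) : ℤ :=
  sSup ({-1} ∪ {r : ℤ | 0 ≤ r ∧
    ∀ l : V → ℤ, Effective l → degree l = r → G.LEffective (f - l)})

/-- The divisor `ε_v`. -/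
def epsDiv (v : V) : V → ℤ := fun u => if u = v then 1 else 0

/-- A tree: a connected acyclic (multi)graph. -/
def IsTree (G : Multigraph V) : Prop :=
  G.toSimple.IsTree ∧ ∀ u v, G.e u v ≤ 1

/-- A cycle graph: connected, and every vertex has degree 2. -/
def IsCycleGraph (G : Multigraph V) : Prop :=
  G.Connected ∧ ∀ v, G.vdeg v = 2

/-- An edge: two vertices joined by a single edge. -/
def IsEdgeGraph (G : Multigraph V) : Prop :=
  Fintype.card V = 2 ∧ G.Connected ∧ ∀ u v, G.e u v ≤ 1

/-- A good divisor (on a cycle): degree `0` and linearly equivalent to `0`. -/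
def Good (G : Multigraph V) (f : V → ℤ) : Prop :=
  degree f = 0 ∧ G.LinEquiv f 0

/-- A bad divisor (on a cycle): degree `0` and not linearly equivalent to `0`. -/
def Bad (G : Multigraph V) (f : V → ℤ) : Prop :=
  degree f = 0 ∧ ¬ G.LinEquiv f 0

/-- The induced sub-multigraph on a finite set `S` of vertices. -/
def induce (G : Multigraph V) (S : Finset V) : Multigraph {x // x ∈ S} where
  e a b := G.e a.1 b.1
  symm := fun a b => G.symm a.1 b.1
  loopless := fun a => G.loopless a.1

/-- `v` decomposes the induced subgraph of `G` on `S` into the induced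
subgraphs on `V1` and `U`: they cover `S`, meet exactly in `v`, are both
connected, and there is no edge between `V1 \ {v}` and `U \ {v}`. -/
def DecompOn (G : Multigraph V) (S : Finset V) (v : V) (V1 U : Finset V) : Prop :=
  V1 ∪ U = S ∧ V1 ∩ U = {v} ∧
  (G.induce V1).Connected ∧ (G.induce U).Connected ∧
  ∀ a ∈ V1, ∀ b ∈ U, a ≠ v → b ≠ v → G.e a b = 0

/-- `v` decomposes `G` into the induced subgraphs on `V1` and `U`. -/
def Decomp (G : Multigraph V) (v : V) (V1 U : Finset V) : Prop :=
  G.DecompOn Finset.univ v V1 U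

/-- The contraction `f_{G/H}` of a divisor `f`, where `H = G(U)` and
`G/H = G(V1)`, the cut vertex being `v`. -/
def contractDiv (f : V → ℤ) (v : V) (V1 U : Finset V) : {x // x ∈ V1} → ℤ :=
  fun u => if u.1 = v then ∑ w ∈ U, f w else f u.1

/-- The zero `f_{N(H)}` of a divisor `f`, where `H = G(U)`, the cut vertex
being `v`. -/
def zeroDiv (f : V → ℤ) (v : V) (U : Finset V) : {x // x ∈ U} → ℤ :=
  fun u => if u.1 = v then - ∑ w ∈ U.erase v, f w else f u.1

/-- `ε_v` as a divisor on an induced subgraph. -/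
def epsDivOn (S : Finset V) (v : V) : {x // x ∈ S} → ℤ :=
  fun u => if u.1 = v then 1 else 0

/-- A simple cycle of `G`, given as a sub-multigraph (an edge-multiplicity
function bounded by that of `G`) which is connected on its support and in
which every vertex of its (nonempty) support has degree 2. -/
def IsCycleSubgraph (G : Multigraph V) (h : V → V → ℕ) : Prop :=
  (∀ u v, h u v ≤ G.e u v) ∧ (∀ u v, h u v = h v u) ∧
  (∀ v, (∑ u, h v u = 0) ∨ (∑ u, h v u = 2)) ∧
  (∃ v, ∑ u, h v u ≠ 0) ∧
  (∀ v w, (∑ u, h v u ≠ 0) → (∑ u, h w u ≠ 0) →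
    Relation.ReflTransGen (fun a b => h a b ≠ 0) v w)

/-- The vertex support of a sub-multigraph. -/
def cycleSupport (h : V → V → ℕ) : Finset V :=
  Finset.univ.filter (fun v => ∑ u, h v u ≠ 0)

/-- A cactus: a connected multigraph in which any two distinct simple cycles
have at most one vertex in common (in particular every edge has multiplicity
at most 2, since parallel edges form 2-cycles). -/
def IsCactus (G : Multigraph V) : Prop :=
  G.Connected ∧ (∀ u v, G.e u v ≤ 2) ∧
  ∀ h₁ h₂ : V → V → ℕ, G.IsCycleSubgraph h₁ → G.IsCycleSubgraph h₂ → h₁ ≠ h₂ →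
    (cycleSupport h₁ ∩ cycleSupport h₂).card ≤ 1

/-- One step of a block elimination scheme: `G(S')` is obtained from `G(S)`
by contracting a free block (an edge or a cycle) `G(U)` at the vertex `v`. -/
def BlockStep (G : Multigraph V) (S S' : Finset V) : Prop :=
  ∃ (v : V) (U : Finset V), G.DecompOn S v S' U ∧
    ((G.induce U).IsEdgeGraph ∨ (G.induce U).IsCycleGraph)

/-- A block elimination scheme: a sequence of contractions of free blocks,
starting from `G` and ending at a single vertex. -/
def HasBlockEliminationScheme (G : Multigraph V) : Prop :=
  ∃ (k : ℕ) (S : ℕ → Finset V), S 0 = Finset.univ ∧ (S k).card = 1 ∧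
    ∀ i < k, G.BlockStep (S i) (S (i + 1))

end Multigraph

open Multigraph

variable {V : Type*} [Fintype V] [DecidableEq V]

namespace MGAux

open Multigraph Finset

variable {V : Type*} [Fintype V] [DecidableEq V]

lemma lapApply_eq_sum (G : Multigraph V) (x : V → ℤ) (p : V) :
    G.lapApply x p = ∑ q, (x p - x q) * (G.e q p : ℤ) := by
  unfold Multigraph.lapApply Multigraph.vdeg
  push_cast
  rw [Finset.mul_sum, ← Finset.sum_sub_distrib]
  apply Finset.sum_congr rfl
  intro q _
  rw [G.symm p q]; ring

lemma lapApply_add (G : Multigraph V) (x y : V → ℤ) :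
    G.lapApply (x + y) = G.lapApply x + G.lapApply y := by
  funext p
  simp only [lapApply_eq_sum, Pi.add_apply, ← Finset.sum_add_distrib]
  apply Finset.sum_congr rfl
  intro q _; ring

lemma lapApply_zero (G : Multigraph V) : G.lapApply 0 = 0 := by
  funext p
  simp [lapApply_eq_sum]

lemma lapApply_neg (G : Multigraph V) (x : V → ℤ) :
    G.lapApply (-x) = - G.lapApply x := by
  funext p
  simp only [lapApply_eq_sum, Pi.neg_apply, ← Finset.sum_neg_distrib]
  apply Finset.sum_congr rfl
  intro q _; ring

/-- The image of the Laplacian, as an additive subgroup of divisors. -/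
def lapIm (G : Multigraph V) : AddSubgroup (V → ℤ) where
  carrier := {g | ∃ x, G.lapApply x = g}
  add_mem' := by
    rintro a b ⟨x, rfl⟩ ⟨y, rfl⟩
    exact ⟨x + y, lapApply_add G x y⟩
  zero_mem' := ⟨0, lapApply_zero G⟩
  neg_mem' := by
    rintro a ⟨x, rfl⟩
    exact ⟨-x, lapApply_neg G x⟩

lemma linEquiv_iff (G : Multigraph V) (f g : V → ℤ) :
    G.LinEquiv f g ↔ g - f ∈ lapIm G := by
  constructor
  · rintro ⟨x, rfl⟩
    exact ⟨x, by abel⟩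
  · rintro ⟨x, hx⟩
    exact ⟨x, by rw [hx]; abel⟩


lemma edge_eq_one {W : Type*} [Fintype W] [DecidableEq W] (H : Multigraph W)
    (hT : H.IsTree) {u w : W} (h : H.e u w ≠ 0) : H.e u w = 1 :=
  le_antisymm (hT.2 u w) (Nat.one_le_iff_ne_zero.mpr h)

lemma tree_step {W : Type*} [Fintype W] [DecidableEq W] (H : Multigraph W)
    (hT : H.IsTree) {u w : W} (h : H.e u w ≠ 0) :
    epsDiv u - epsDiv w ∈ lapIm H := by
  classical
  have hadj : H.toSimple.Adj u w := h
  have huw : u ≠ w := by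
    intro he; subst he; exact h (H.loopless u)
  have hbridge := (SimpleGraph.isAcyclic_iff_forall_adj_isBridge.mp hT.1.IsAcyclic) hadj
  rw [SimpleGraph.isBridge_iff] at hbridge
  set D := H.toSimple \ SimpleGraph.fromEdgeSet {s(u, w)} with hD
  set A : W → Prop := fun p => D.Reachable u p with hA
  have hAu : A u := SimpleGraph.Reachable.refl u
  have hAw : ¬ A w := hbridge
  -- crossing an edge other than {u,w} preserves A
  have hstep : ∀ p q : W, H.e q p ≠ 0 → s(q, p) ≠ s(u, w) → (A q ↔ A p) := by
    intro p q he hne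
    have hDadj : D.Adj q p := by
      rw [hD, SimpleGraph.sdiff_adj]
      refine ⟨he, ?_⟩
      rw [SimpleGraph.fromEdgeSet_adj]
      rintro ⟨hmem, -⟩
      exact hne hmem
    exact ⟨fun hr => hr.trans hDadj.reachable,
      fun hr => hr.trans hDadj.symm.reachable⟩
  set x : W → ℤ := fun p => if A p then 1 else 0 with hx
  refine ⟨x, ?_⟩
  funext p
  rw [lapApply_eq_sum]
  have hxeq : ∀ p q : W, H.e q p ≠ 0 → s(q, p) ≠ s(u, w) → x q = x p := by
    intro p q he hne
    rw [hx]; simp only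
    rw [if_congr (hstep p q he hne) rfl rfl]
  by_cases hpu : p = u
  · rw [Finset.sum_eq_single w]
    · have h1 : x p = 1 := by rw [hx]; simp only; rw [if_pos (hpu ▸ hAu)]
      have h0 : x w = 0 := if_neg hAw
      have hew : H.e w p = 1 := by
        rw [H.symm w p, hpu]; exact edge_eq_one H hT h
      rw [h1, h0, hew, Pi.sub_apply]
      norm_num [epsDiv, hpu, huw]
    · intro q _ hqw
      by_cases he : H.e q p = 0
      · simp [he]
      · have hne : s(q, p) ≠ s(u, w) := by
          intro hEq
          rw [Sym2.eq_iff] at hEq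
          rcases hEq with ⟨h1, h2⟩ | ⟨h1, h2⟩
          · rw [h1, ← hpu] at he; exact he (H.loopless p)
          · exact hqw h1
        rw [hxeq p q he hne]; ring
    · intro hw; exact absurd (Finset.mem_univ w) hw
  · by_cases hpw : p = w
    · rw [Finset.sum_eq_single u]
      · have h1 : x u = 1 := if_pos hAu
        have h0 : x p = 0 := by rw [hx]; simp only; rw [if_neg (hpw ▸ hAw)]
        have hew : H.e u p = 1 := by rw [hpw]; exact edge_eq_one H hT h
        rw [h1, h0, hew, Pi.sub_apply]
        norm_num [epsDiv, hpw, huw, (Ne.symm huw)]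
      · intro q _ hqu
        by_cases he : H.e q p = 0
        · simp [he]
        · have hne : s(q, p) ≠ s(u, w) := by
            intro hEq
            rw [Sym2.eq_iff] at hEq
            rcases hEq with ⟨h1, h2⟩ | ⟨h1, h2⟩
            · exact hqu h1
            · rw [h1, ← hpw] at he; exact he (H.loopless p)
          rw [hxeq p q he hne]; ring
      · intro hu; exact absurd (Finset.mem_univ u) hu
    · rw [Finset.sum_eq_zero, Pi.sub_apply]
      · simp [epsDiv, hpu, hpw]
      · intro q _
        by_cases he : H.e q p = 0
        · simp [he]
        · have hne : s(q, p) ≠ s(u, w) := by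
            intro hEq
            rw [Sym2.eq_iff] at hEq
            rcases hEq with ⟨h1, h2⟩ | ⟨h1, h2⟩
            · exact hpw h2
            · exact hpu h2
          rw [hxeq p q he hne]; ring

lemma tree_move {W : Type*} [Fintype W] [DecidableEq W] (H : Multigraph W)
    (hT : H.IsTree) (a b : W) : epsDiv a - epsDiv b ∈ lapIm H := by
  have hr : H.toSimple.Reachable a b := hT.1.isConnected.preconnected a b
  obtain ⟨wk⟩ := hr
  induction wk with
  | nil => simpa using (lapIm H).zero_mem
  | @cons a c b hac wk ih =>
      have h1 : epsDiv (V := W) a - epsDiv b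
          = (epsDiv a - epsDiv c) + (epsDiv c - epsDiv b) := by abel
      rw [h1]
      exact AddSubgroup.add_mem _ (tree_step H hT hac) ih

lemma tree_principal {W : Type*} [Fintype W] [DecidableEq W] (H : Multigraph W)
    (hT : H.IsTree) (v : W) (g : W → ℤ) :
    g - (degree g) • epsDiv v ∈ lapIm H := by
  have hrepr : g - (degree g) • epsDiv v = ∑ u, g u • (epsDiv u - epsDiv v) := by
    funext p
    rw [Finset.sum_apply]
    simp only [Pi.smul_apply, Pi.sub_apply, smul_eq_mul, epsDiv, degree, mul_sub,
      Finset.sum_sub_distrib]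
    by_cases hp : p = v <;>
      simp [hp, Finset.mul_sum, mul_comm, ← Finset.sum_mul]
  rw [hrepr]
  exact AddSubgroup.sum_mem _ fun u _ => AddSubgroup.zsmul_mem _ (tree_move H hT u v) _

lemma contract_add (v : V) (V1 U : Finset V) (f g : V → ℤ) :
    contractDiv (f + g) v V1 U = contractDiv f v V1 U + contractDiv g v V1 U := by
  funext u
  simp only [contractDiv, Pi.add_apply]
  split_ifs with h
  · rw [Finset.sum_add_distrib]
  · rfl

lemma contract_sub (v : V) (V1 U : Finset V) (f g : V → ℤ) :
    contractDiv (f - g) v V1 U = contractDiv f v V1 U - contractDiv g v V1 U := by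
  funext u
  simp only [contractDiv, Pi.sub_apply]
  split_ifs with h
  · rw [Finset.sum_sub_distrib]
  · rfl

lemma contract_effective (v : V) (V1 U : Finset V) {g : V → ℤ} (hg : Effective g) :
    Effective (contractDiv g v V1 U) := by
  intro u
  simp only [contractDiv]
  split_ifs with h
  · exact Finset.sum_nonneg fun w _ => hg w
  · exact hg u.1

lemma sum_split (v : V) (V1 U : Finset V) (huni : V1 ∪ U = Finset.univ)
    (hint : V1 ∩ U = {v}) (F : V → ℤ) :
    ∑ p, F p = ∑ p ∈ V1, F p + ∑ p ∈ U, F p - F v := by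
  have h := Finset.sum_union_inter (s₁ := V1) (s₂ := U) (f := F)
  rw [huni, hint, Finset.sum_singleton] at h
  linarith

lemma contract_coe_sum (v : V) (V1 U : Finset V) (f : V → ℤ) :
    degree (contractDiv f v V1 U)
      = ∑ p ∈ V1, (if p = v then ∑ w ∈ U, f w else f p) :=
  Finset.sum_coe_sort V1 (fun p => if p = v then ∑ w ∈ U, f w else f p)

lemma degree_contract (v : V) (V1 U : Finset V) (hvV1 : v ∈ V1)
    (huni : V1 ∪ U = Finset.univ) (hint : V1 ∩ U = {v}) (f : V → ℤ) :
    degree (contractDiv f v V1 U) = degree f := by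
  rw [contract_coe_sum v V1 U f]
  have h1 : ∑ p ∈ V1, (if p = v then ∑ w ∈ U, f w else f p)
      = ∑ w ∈ U, f w + ∑ p ∈ V1 \ {v}, f p := by
    rw [Finset.sum_congr rfl fun p _ => (Function.update_apply f v (∑ w ∈ U, f w) p).symm]
    exact Finset.sum_update_of_mem hvV1 f _
  have h2 : f v + ∑ p ∈ V1.erase v, f p = ∑ p ∈ V1, f p := Finset.add_sum_erase V1 f hvV1
  have h3 : V1 \ {v} = V1.erase v := (Finset.erase_eq V1 v).symm
  unfold Multigraph.degree
  rw [h1, h3, sum_split v V1 U huni hint f]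
  linarith

lemma lap_contract (G : Multigraph V) (v : V) (V1 U : Finset V)
    (hvV1 : v ∈ V1) (hvU : v ∈ U)
    (hdisj : ∀ p, p ∈ V1 → p ∈ U → p = v)
    (hcov : ∀ p : V, p ∈ V1 ∨ p ∈ U)
    (hcross : ∀ a ∈ V1, ∀ b ∈ U, a ≠ v → b ≠ v → G.e a b = 0) (x : V → ℤ) :
    contractDiv (G.lapApply x) v V1 U = (G.induce V1).lapApply (fun u => x u.1) := by
  funext u
  have hR : (G.induce V1).lapApply (fun w : {x // x ∈ V1} => x w.1) u
      = ∑ q ∈ V1, (x u.1 - x q) * (G.e q u.1 : ℤ) := by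
    rw [lapApply_eq_sum]
    exact Finset.sum_coe_sort V1 (fun q => (x u.1 - x q) * (G.e q u.1 : ℤ))
  by_cases hu : u.1 = v
  · have hL : contractDiv (G.lapApply x) v V1 U u = ∑ w ∈ U, G.lapApply x w :=
      if_pos hu
    rw [hL, hR, hu]
    have hsplit : ∀ w, G.lapApply x w = ∑ q ∈ U, (x w - x q) * (G.e q w : ℤ)
        + ∑ q ∈ Uᶜ, (x w - x q) * (G.e q w : ℤ) := by
      intro w
      rw [lapApply_eq_sum, Finset.sum_add_sum_compl U]
    rw [Finset.sum_congr rfl fun w _ => hsplit w, Finset.sum_add_distrib]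
    have h2 : ∑ w ∈ U, ∑ q ∈ U, (x w - x q) * (G.e q w : ℤ)
        = ∑ w ∈ U, ∑ q ∈ U, (x q - x w) * (G.e w q : ℤ) := Finset.sum_comm
    have h3 : ∑ w ∈ U, ∑ q ∈ U, ((x w - x q) * (G.e q w : ℤ)
        + (x q - x w) * (G.e w q : ℤ)) = 0 := by
      apply Finset.sum_eq_zero; intro w _
      apply Finset.sum_eq_zero; intro q _
      rw [G.symm w q]; ring
    have h1 : ∑ w ∈ U, ∑ q ∈ U, (x w - x q) * (G.e q w : ℤ) = 0 := by
      have h4 := h3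
      rw [Finset.sum_congr rfl fun w _ => Finset.sum_add_distrib,
        Finset.sum_add_distrib, ← h2] at h4
      linarith
    rw [h1, zero_add, Finset.sum_comm]
    have h4 : ∀ q ∈ Uᶜ, ∑ w ∈ U, (x w - x q) * (G.e q w : ℤ)
        = (x v - x q) * (G.e q v : ℤ) := by
      intro q hq
      have hqU : q ∉ U := Finset.mem_compl.mp hq
      apply Finset.sum_eq_single v
      · intro w hw hwv
        have hqV1 : q ∈ V1 := (hcov q).resolve_right hqU
        have hqv : q ≠ v := fun h => hqU (h ▸ hvU)
        simp [hcross q hqV1 w hw hqv hwv]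
      · intro hv'; exact absurd hvU hv'
    rw [Finset.sum_congr rfl h4]
    apply Finset.sum_subset
    · intro q hq
      exact (hcov q).resolve_right (Finset.mem_compl.mp hq)
    · intro q hq hq2
      have hqU : q ∈ U := by simpa using hq2
      have : q = v := hdisj q hq hqU
      simp [this]
  · have hL : contractDiv (G.lapApply x) v V1 U u = G.lapApply x u.1 := if_neg hu
    rw [hL, hR, lapApply_eq_sum]
    symm
    apply Finset.sum_subset
    · exact fun q _ => Finset.mem_univ q
    · intro q _ hq
      have hqU : q ∈ U := (hcov q).resolve_left hq
      have hqv : q ≠ v := fun h => hq (h ▸ hvV1)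
      have he : G.e u.1 q = 0 := hcross u.1 u.2 q hqU hu hqv
      rw [G.symm q u.1]
      simp [he]

lemma lap_extend (G : Multigraph V) (S : Finset V) (v : V) (hvS : v ∈ S)
    (hcr : ∀ a ∈ S, ∀ b, b ∉ S → a ≠ v → G.e a b = 0)
    (y : {x // x ∈ S} → ℤ) (p : V) :
    G.lapApply (fun q => if h : q ∈ S then y ⟨q, h⟩ else y ⟨v, hvS⟩) p
      = if h : p ∈ S then (G.induce S).lapApply y ⟨p, h⟩ else 0 := by
  set x : V → ℤ := fun q => if h : q ∈ S then y ⟨q, h⟩ else y ⟨v, hvS⟩ with hxdef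
  have hxin : ∀ q : {x // x ∈ S}, x q.1 = y q := by
    intro q
    rw [hxdef]
    simp only [dif_pos q.2]
  have hxout : ∀ q, q ∉ S → x q = y ⟨v, hvS⟩ := by
    intro q hq
    rw [hxdef]
    simp only [dif_neg hq]
  rw [lapApply_eq_sum]
  by_cases hp : p ∈ S
  · rw [dif_pos hp]
    have hR : (G.induce S).lapApply y ⟨p, hp⟩
        = ∑ q ∈ S, (x p - x q) * (G.e q p : ℤ) := by
      rw [lapApply_eq_sum,
        ← Finset.sum_coe_sort S (fun q => (x p - x q) * (G.e q p : ℤ))]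
      apply Finset.sum_congr rfl
      intro q _
      rw [hxin q, hxin ⟨p, hp⟩]
      rfl
    rw [hR]
    symm
    apply Finset.sum_subset (Finset.subset_univ S)
    intro q _ hq
    by_cases hpv : p = v
    · rw [hxout q hq, hpv, hxin ⟨v, hvS⟩]
      ring
    · have he : G.e p q = 0 := hcr p hp q hq hpv
      rw [G.symm q p]
      simp [he]
  · rw [dif_neg hp]
    apply Finset.sum_eq_zero
    intro q _
    by_cases hq : q ∈ S
    · by_cases hqv : q = v
      · rw [hxout p hp, hqv, hxin ⟨v, hvS⟩]
        ring
      · have he : G.e q p = 0 := hcr q hq p hp hqv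
        simp [he]
    · rw [hxout p hp, hxout q hq]
      ring

/-- Extension of a divisor on `G(V1)` by zero. -/
def extendDiv (V1 : Finset V) (l1 : {x // x ∈ V1} → ℤ) : V → ℤ :=
  fun p => if h : p ∈ V1 then l1 ⟨p, h⟩ else 0

lemma extend_effective (V1 : Finset V) (l1 : {x // x ∈ V1} → ℤ)
    (h : Effective l1) : Effective (extendDiv V1 l1) := by
  intro p
  unfold extendDiv
  split_ifs with hp
  · exact h _
  · exact le_refl 0

lemma contract_extend (v : V) (V1 U : Finset V) (hvV1 : v ∈ V1) (hvU : v ∈ U)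
    (hdisj : ∀ p, p ∈ V1 → p ∈ U → p = v) (l1 : {x // x ∈ V1} → ℤ) :
    contractDiv (extendDiv V1 l1) v V1 U = l1 := by
  funext u
  simp only [contractDiv, extendDiv]
  split_ifs with hu h
  · rw [Finset.sum_eq_single v]
    · rw [dif_pos hvV1]
      congr 1
      exact Subtype.ext hu.symm
    · intro w hw hwv
      rw [dif_neg]
      intro hwV1
      exact hwv (hdisj w hwV1 hw)
    · intro h; exact absurd hvU h
  · exact congrArg l1 (Subtype.ext rfl)
  · exact absurd u.2 h

lemma degree_extend (v : V) (V1 U : Finset V) (hvV1 : v ∈ V1) (hvU : v ∈ U)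
    (huni : V1 ∪ U = Finset.univ) (hint : V1 ∩ U = {v})
    (hdisj : ∀ p, p ∈ V1 → p ∈ U → p = v) (l1 : {x // x ∈ V1} → ℤ) :
    degree (extendDiv V1 l1) = degree l1 := by
  have h := degree_contract v V1 U hvV1 huni hint (extendDiv V1 l1)
  rw [contract_extend v V1 U hvV1 hvU hdisj l1] at h
  exact h.symm

lemma leff_contract (G : Multigraph V) (v : V) (V1 U : Finset V)
    (hvV1 : v ∈ V1) (hvU : v ∈ U)
    (hdisj : ∀ p, p ∈ V1 → p ∈ U → p = v)
    (hcov : ∀ p : V, p ∈ V1 ∨ p ∈ U)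
    (hcross : ∀ a ∈ V1, ∀ b ∈ U, a ≠ v → b ≠ v → G.e a b = 0)
    {f : V → ℤ} (hf : G.LEffective f) :
    (G.induce V1).LEffective (contractDiv f v V1 U) := by
  obtain ⟨g, ⟨x, rfl⟩, heff⟩ := hf
  refine ⟨contractDiv (f + G.lapApply x) v V1 U, ⟨fun u => x u.1, ?_⟩,
    contract_effective v V1 U heff⟩
  rw [contract_add, lap_contract G v V1 U hvV1 hvU hdisj hcov hcross]

lemma leff_expand (G : Multigraph V) (v : V) (V1 U : Finset V)
    (hvV1 : v ∈ V1) (hvU : v ∈ U)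
    (hdisj : ∀ p, p ∈ V1 → p ∈ U → p = v)
    (hcov : ∀ p : V, p ∈ V1 ∨ p ∈ U)
    (hcross : ∀ a ∈ V1, ∀ b ∈ U, a ≠ v → b ≠ v → G.e a b = 0)
    (hH : (G.induce U).IsTree) {f : V → ℤ}
    (hf : (G.induce V1).LEffective (contractDiv f v V1 U)) :
    G.LEffective f := by
  classical
  obtain ⟨y, hy⟩ := tree_principal (G.induce U) hH ⟨v, hvU⟩ (fun u => f u.1)
  obtain ⟨g1, ⟨x1, hg1⟩, heff1⟩ := hf
  have hcrU : ∀ a ∈ U, ∀ b, b ∉ U → a ≠ v → G.e a b = 0 := by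
    intro a ha b hb hav
    have hbV1 : b ∈ V1 := (hcov b).resolve_right hb
    have hbv : b ≠ v := fun h => hb (h ▸ hvU)
    rw [G.symm]
    exact hcross b hbV1 a ha hbv hav
  have hcrV1 : ∀ a ∈ V1, ∀ b, b ∉ V1 → a ≠ v → G.e a b = 0 := by
    intro a ha b hb hav
    have hbU : b ∈ U := (hcov b).resolve_left hb
    have hbv : b ≠ v := fun h => hb (h ▸ hvV1)
    exact hcross a ha b hbU hav hbv
  have hdeg : degree (fun u : {x // x ∈ U} => f u.1) = ∑ w ∈ U, f w :=
    Finset.sum_coe_sort U f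
  refine ⟨extendDiv V1 g1,
    ⟨(fun q => if h : q ∈ U then (-y) ⟨q, h⟩ else (-y) ⟨v, hvU⟩)
      + (fun q => if h : q ∈ V1 then x1 ⟨q, h⟩ else x1 ⟨v, hvV1⟩), ?_⟩,
    extend_effective V1 g1 heff1⟩
  rw [lapApply_add]
  funext p
  have hU := lap_extend G U v hvU hcrU (-y) p
  have hV := lap_extend G V1 v hvV1 hcrV1 x1 p
  simp only [Pi.add_apply]
  rw [hU, hV]
  have hyneg : (G.induce U).lapApply (-y)
      = -((fun u : {x // x ∈ U} => f u.1) - degree (fun u : {x // x ∈ U} => f u.1)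
        • epsDiv ⟨v, hvU⟩) := by
    rw [lapApply_neg, hy]
  by_cases hpV : p ∈ V1
  · rw [dif_pos hpV]
    by_cases hpU : p ∈ U
    · have hpv : p = v := hdisj p hpV hpU
      rw [dif_pos hpU]
      have h1 : extendDiv V1 g1 p = g1 ⟨p, hpV⟩ := dif_pos hpV
      rw [h1, hg1]
      have h2 : (G.induce U).lapApply (-y) ⟨p, hpU⟩
          = degree (fun u : {x // x ∈ U} => f u.1) - f p := by
        rw [hyneg]
        simp [epsDiv, Subtype.ext_iff, hpv]
      rw [h2, hdeg]
      have h3 : contractDiv f v V1 U ⟨p, hpV⟩ = ∑ w ∈ U, f w := if_pos hpv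
      simp only [Pi.add_apply, h3]
      ring
    · rw [dif_neg hpU]
      have hpv : p ≠ v := fun h => hpU (h ▸ hvU)
      have h1 : extendDiv V1 g1 p = g1 ⟨p, hpV⟩ := dif_pos hpV
      rw [h1, hg1]
      have h3 : contractDiv f v V1 U ⟨p, hpV⟩ = f p := if_neg hpv
      simp only [Pi.add_apply, h3]
      ring
  · have hpU : p ∈ U := (hcov p).resolve_left hpV
    have hpv : p ≠ v := fun h => hpV (h ▸ hvV1)
    rw [dif_pos hpU, dif_neg hpV]
    have h1 : extendDiv V1 g1 p = 0 := dif_neg hpV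
    have h2 : (G.induce U).lapApply (-y) ⟨p, hpU⟩ = -(f p) := by
      rw [hyneg]
      simp [epsDiv, Subtype.ext_iff, hpv]
    rw [h1, h2]
    ring

end MGAux

/-- if a cut vertex `v` decomposes `G` into `G/H = G(V1)` and
`H = G(U)` where `H` is a tree, then `ρ_G(f) = ρ_{G/H}(f_{G/H})`. -/
theorem rank_contract_tree (G : Multigraph V) (hG : G.Connected)
    (v : V) (V1 U : Finset V) (hd : G.Decomp v V1 U)
    (hH : (G.induce U).IsTree) (f : V → ℤ) :
    G.rank f = (G.induce V1).rank (contractDiv f v V1 U) := by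
  obtain ⟨huni, hint, hc1, hc2, hcross⟩ := hd
  have hvV1 : v ∈ V1 := by
    have h : v ∈ V1 ∩ U := by rw [hint]; exact Finset.mem_singleton_self v
    exact (Finset.mem_inter.mp h).1
  have hvU : v ∈ U := by
    have h : v ∈ V1 ∩ U := by rw [hint]; exact Finset.mem_singleton_self v
    exact (Finset.mem_inter.mp h).2
  have hdisj : ∀ p, p ∈ V1 → p ∈ U → p = v := by
    intro p h1 h2
    have h : p ∈ V1 ∩ U := Finset.mem_inter.mpr ⟨h1, h2⟩
    rw [hint] at h
    exact Finset.mem_singleton.mp h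
  have hcov : ∀ p : V, p ∈ V1 ∨ p ∈ U := by
    intro p
    have h : p ∈ V1 ∪ U := by rw [huni]; exact Finset.mem_univ p
    exact Finset.mem_union.mp h
  unfold Multigraph.rank
  congr 1
  ext r
  simp only [Set.mem_union, Set.mem_singleton_iff, Set.mem_setOf_eq]
  apply or_congr Iff.rfl
  apply and_congr Iff.rfl
  constructor
  · intro hP l1 heff1 hdeg1
    have h1 := hP (MGAux.extendDiv V1 l1) (MGAux.extend_effective V1 l1 heff1)
      (by rw [MGAux.degree_extend v V1 U hvV1 hvU huni hint hdisj l1]; exact hdeg1)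
    have h2 := MGAux.leff_contract G v V1 U hvV1 hvU hdisj hcov hcross h1
    rw [MGAux.contract_sub, MGAux.contract_extend v V1 U hvV1 hvU hdisj l1] at h2
    exact h2
  · intro hP l heff hdeg
    have h1 := hP (contractDiv l v V1 U) (MGAux.contract_effective v V1 U heff)
      (by rw [MGAux.degree_contract v V1 U hvV1 huni hint]; exact hdeg)
    apply MGAux.leff_expand G v V1 U hvV1 hvU hdisj hcov hcross hH
    rw [MGAux.contract_sub]
    exact h1
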